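/- Let a, b ∈ ℝ and set p = 1/(1 + e^{-a}) and p' = 1/(1 + e^{-b}). Then the Kullback–Leibler divergence between the corresponding Bernoulli distributions satisfies p·log(p/p') + (1−p)·log((1−p)/(1−p')) ≤ (a − b)². -/

import Mathlib

open Real

noncomputable def sig (t : ℝ) : ℝ := 1 / (1 + Real.exp (-t))

lemma sig_continuous : Continuous sig := by
  apply continuous_const.div (by continuity)
  intro x
  have : (0:ℝ) < 1 + Real.exp (-x) := by positivity
  exact this.ne'

lemma hasDerivAt_sig (t : ℝ) :
    HasDerivAt sig (Real.exp (-t) / (1 + Real.exp (-t))^2) t := by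
  have h1 : HasDerivAt (fun t : ℝ => 1 + Real.exp (-t)) (-Real.exp (-t)) t := by
    simpa using ((Real.hasDerivAt_exp (-t)).comp t (hasDerivAt_neg t)).const_add 1
  have h2 := h1.inv (by positivity)
  have hfun : (fun t : ℝ => 1 + Real.exp (-t))⁻¹ = sig := by
    funext y; simp [sig]
  rw [hfun] at h2
  rw [neg_neg] at h2
  exact h2

lemma sig_deriv_mem (t : ℝ) : Real.exp (-t) / (1 + Real.exp (-t))^2 ∈ Set.Icc (0:ℝ) 1 := by
  constructor
  · positivity
  · rw [div_le_one (by positivity)]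
    nlinarith [Real.exp_pos (-t)]

lemma sig_lip (x y : ℝ) : |sig x - sig y| ≤ |x - y| := by
  rcases lt_trichotomy x y with h | h | h
  · obtain ⟨c, _, hc⟩ := exists_hasDerivAt_eq_slope sig
      (fun t => Real.exp (-t) / (1 + Real.exp (-t))^2) h
      sig_continuous.continuousOn (fun t _ => hasDerivAt_sig t)
    have h1 := sig_deriv_mem c
    rw [eq_div_iff (sub_ne_zero.mpr h.ne')] at hc
    have hd : sig y - sig x = (Real.exp (-c) / (1 + Real.exp (-c))^2) * (y - x) := by
      linarith
    rw [abs_sub_comm, abs_sub_comm x y, hd,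
      abs_of_nonneg (by nlinarith [h1.1, h1.2]), abs_of_nonneg (by linarith)]
    nlinarith [h1.1, h1.2]
  · simp [h]
  · obtain ⟨c, _, hc⟩ := exists_hasDerivAt_eq_slope sig
      (fun t => Real.exp (-t) / (1 + Real.exp (-t))^2) h
      sig_continuous.continuousOn (fun t _ => hasDerivAt_sig t)
    have h1 := sig_deriv_mem c
    rw [eq_div_iff (sub_ne_zero.mpr h.ne')] at hc
    have hd : sig x - sig y = (Real.exp (-c) / (1 + Real.exp (-c))^2) * (x - y) := by
      linarith
    rw [hd, abs_of_nonneg (by nlinarith [h1.1, h1.2]), abs_of_nonneg (by linarith)]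
    nlinarith [h1.1, h1.2]

lemma hasDerivAt_lse (t : ℝ) :
    HasDerivAt (fun t : ℝ => Real.log (1 + Real.exp t)) (sig t) t := by
  have h1 : HasDerivAt (fun t : ℝ => 1 + Real.exp t) (Real.exp t) t :=
    (Real.hasDerivAt_exp t).const_add 1
  have h2 := h1.log (by positivity)
  convert h2 using 1
  unfold sig
  rw [Real.exp_neg]
  have := Real.exp_pos t
  field_simp
  ring

lemma bregman (A B : ℝ) :
    Real.log (1 + Real.exp B) - Real.log (1 + Real.exp A) - sig A * (B - A) ≤ (B - A)^2 := by
  set f : ℝ → ℝ := fun t => Real.log (1 + Real.exp t) with hf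
  have hcont : Continuous f := by
    apply Continuous.log (by continuity)
    intro x
    have : (0:ℝ) < 1 + Real.exp x := by positivity
    exact this.ne'
  rcases lt_trichotomy A B with h | h | h
  · obtain ⟨c, hcm, hc⟩ := exists_hasDerivAt_eq_slope f sig h hcont.continuousOn
      (fun t _ => hasDerivAt_lse t)
    rw [eq_div_iff (sub_ne_zero.mpr h.ne')] at hc
    have hfb : f B - f A = sig c * (B - A) := by linarith
    have hl := sig_lip c A
    have h2 : |c - A| ≤ |B - A| := by
      rw [abs_of_nonneg (by linarith [hcm.1]), abs_of_nonneg (by linarith)]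
      linarith [hcm.2]
    have heq : f B - f A - sig A * (B - A) = (sig c - sig A) * (B - A) := by
      rw [hfb]; ring
    rw [heq]
    calc (sig c - sig A) * (B - A) ≤ |sig c - sig A| * |B - A| := by
          rw [← abs_mul]; exact le_abs_self _
      _ ≤ |B - A| * |B - A| :=
          mul_le_mul_of_nonneg_right (le_trans hl h2) (abs_nonneg _)
      _ = (B - A)^2 := by rw [← abs_mul, abs_mul_self]; ring
  · subst h; simp
  · obtain ⟨c, hcm, hc⟩ := exists_hasDerivAt_eq_slope f sig h hcont.continuousOn
      (fun t _ => hasDerivAt_lse t)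
    rw [eq_div_iff (sub_ne_zero.mpr h.ne')] at hc
    have hfb : f B - f A = sig c * (B - A) := by linarith
    have hl := sig_lip c A
    have h2 : |c - A| ≤ |B - A| := by
      rw [abs_of_nonpos (by linarith [hcm.2]), abs_of_nonpos (by linarith)]
      linarith [hcm.1]
    have heq : f B - f A - sig A * (B - A) = (sig c - sig A) * (B - A) := by
      rw [hfb]; ring
    rw [heq]
    calc (sig c - sig A) * (B - A) ≤ |sig c - sig A| * |B - A| := by
          rw [← abs_mul]; exact le_abs_self _
      _ ≤ |B - A| * |B - A| :=
          mul_le_mul_of_nonneg_right (le_trans hl h2) (abs_nonneg _)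
      _ = (B - A)^2 := by rw [← abs_mul, abs_mul_self]; ring

theorem stmt13 (a b : ℝ) :
    (1 / (1 + Real.exp (-a))) * Real.log ((1 / (1 + Real.exp (-a))) / (1 / (1 + Real.exp (-b)))) +
        (1 - 1 / (1 + Real.exp (-a))) *
          Real.log ((1 - 1 / (1 + Real.exp (-a))) / (1 - 1 / (1 + Real.exp (-b)))) ≤
      (a - b) ^ 2 := by
  have hA : (0:ℝ) < 1 + Real.exp (-a) := by positivity
  have hB : (0:ℝ) < 1 + Real.exp (-b) := by positivity
  have h1a : 1 - 1 / (1 + Real.exp (-a)) = Real.exp (-a) / (1 + Real.exp (-a)) := by field_simp; ring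
  have h1b : 1 - 1 / (1 + Real.exp (-b)) = Real.exp (-b) / (1 + Real.exp (-b)) := by field_simp; ring
  rw [h1a, h1b]
  have e1 : Real.log ((1 / (1 + Real.exp (-a))) / (1 / (1 + Real.exp (-b)))) =
      Real.log (1 + Real.exp (-b)) - Real.log (1 + Real.exp (-a)) := by
    rw [Real.log_div (by positivity) (by positivity), Real.log_div one_ne_zero hA.ne',
      Real.log_div one_ne_zero hB.ne', Real.log_one]
    ring
  have e2 : Real.log ((Real.exp (-a) / (1 + Real.exp (-a))) / (Real.exp (-b) / (1 + Real.exp (-b)))) =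
      ((-a) - Real.log (1 + Real.exp (-a))) - ((-b) - Real.log (1 + Real.exp (-b))) := by
    rw [Real.log_div (by positivity) (by positivity),
      Real.log_div (Real.exp_ne_zero _) hA.ne', Real.log_div (Real.exp_ne_zero _) hB.ne',
      Real.log_exp, Real.log_exp]
  rw [e1, e2]
  have key := bregman (-a) (-b)
  have hq : Real.exp (-a) / (1 + Real.exp (-a)) = sig (-a) := by
    unfold sig
    rw [neg_neg, Real.exp_neg]
    have := Real.exp_pos a
    field_simp
    ring
  have hP : 1 / (1 + Real.exp (-a)) = 1 - sig (-a) := by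
    rw [← hq]; field_simp; ring
  rw [hq, hP]
  nlinarith [key]
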